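/- Let A be a finitely generated normal M-graded domain over a field K of characteristic 0, and let ∂ be a derivation on A. Then ∂ decomposes as a finite sum ∂ = Σ_{e ∈ M} ∂_e, where each ∂_e is a homogeneous derivation of degree e; moreover if ∂ is locally nilpotent and e is a vertex of the convex hull Δ(∂) of {e ∈ M : ∂_e ≠ 0} in M_ℚ, then ∂_e is locally nilpotent. -/

import Mathlib

noncomputable section

/-- Inclusion of the lattice `ℤⁿ` into `ℚⁿ`. -/
def toQ {n : ℕ} (v : Fin n → ℤ) : Fin n → ℚ := fun i => (v i : ℚ)

/-- A derivation is locally nilpotent if every element is annihilated by some iterate. -/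
def IsLND {R A : Type*} [CommRing R] [CommRing A] [Algebra R A]
    (D : Derivation R A A) : Prop :=
  ∀ a : A, ∃ k : ℕ, (⇑D)^[k] a = 0

open DirectSum Finset


lemma extreme_avg {𝕜 V : Type*} [Field 𝕜] [LinearOrder 𝕜] [IsStrictOrderedRing 𝕜] [AddCommGroup V] [Module 𝕜 V]
    {C : Set V} (hC : Convex 𝕜 C) {x : V} (hx : x ∈ Set.extremePoints 𝕜 C) :
    ∀ (k : ℕ) (f : Fin k → V), (∀ i, f i ∈ C) → (∑ i, f i = k • x) → ∀ i, f i = x := by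
  intro k
  induction k with
  | zero => intro f _ _ i; exact i.elim0
  | succ k ih =>
    intro f hf hsum i
    rw [Fin.sum_univ_castSucc] at hsum
    set S : V := ∑ j : Fin k, f j.castSucc with hS
    set y : V := f (Fin.last k) with hy
    rcases Nat.eq_zero_or_pos k with hk | hk
    · subst hk
      have hS0 : S = 0 := by simp [hS]
      have : y = x := by
        rw [hS0] at hsum
        simpa using hsum
      have hi : i = Fin.last 0 := Fin.fin_one_eq_zero i ▸ rfl
      rw [hi, ← hy, this]
    · have hkQ : (k : 𝕜) ≠ 0 := Nat.cast_ne_zero.mpr hk.ne'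
      have hk1 : ((k : 𝕜) + 1) ≠ 0 := by positivity
      set z : V := (k : 𝕜)⁻¹ • S with hz
      have hzC : z ∈ C := by
        have := hC.sum_mem (t := (univ : Finset (Fin k))) (w := fun _ => (k : 𝕜)⁻¹)
          (z := fun j => f j.castSucc) (fun i _ => by positivity)
          (by simp [Finset.sum_const]; field_simp) (fun i _ => hf _)
        rwa [← Finset.smul_sum] at this
      have hxseg : x ∈ openSegment 𝕜 z y := by
        refine ⟨(k : 𝕜) / (k + 1), 1 / (k + 1), by positivity, by positivity, by field_simp, ?_⟩
        rw [hz, smul_smul]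
        have h1 : (k : 𝕜) / (k + 1) * (k : 𝕜)⁻¹ = 1 / (k + 1) := by field_simp
        rw [h1, ← smul_add, hsum]
        have h2 : ((k + 1 : ℕ) : 𝕜) • x = (k + 1 : ℕ) • x := Nat.cast_smul_eq_nsmul 𝕜 _ _
        push_cast at h2
        rw [← h2, smul_smul]
        field_simp
        rw [one_smul]
      obtain ⟨hzx, hyx⟩ := (mem_extremePoints.mp hx).2 _ hzC _ (hf _) hxseg
      have hSsum : S = k • x := by
        have : S = (k : 𝕜) • z := by rw [hz, smul_smul]; field_simp; rw [one_smul]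
        rw [this, hzx, Nat.cast_smul_eq_nsmul]
      have hall := ih (fun j => f j.castSucc) (fun j => hf _) hSsum
      refine Fin.lastCases ?_ ?_ i
      · exact hyx
      · intro j; exact hall j

lemma toQ_inj {n : ℕ} : Function.Injective (toQ (n := n)) := fun v w h =>
  funext fun j => Int.cast_injective (congrFun h j)

lemma toQ_sum {n k : ℕ} (f : Fin k → (Fin n → ℤ)) : toQ (∑ i, f i) = ∑ i, toQ (f i) := by
  funext j
  simp only [toQ, Finset.sum_apply]
  push_cast
  rfl

lemma toQ_nsmul {n : ℕ} (k : ℕ) (e : Fin n → ℤ) : toQ (k • e) = k • toQ e := by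
  funext j
  simp [toQ]


section Graded
variable {n : ℕ} {K A : Type*} [Field K] [CommRing A] [Algebra K A]
  (𝒜 : (Fin n → ℤ) → Submodule K A) [GradedAlgebra 𝒜]

abbrev Mlat (n : ℕ) := Fin n → ℤ

/-- projection onto degree t, as a linear endomap of A -/
noncomputable def projG (t : Mlat n) : A →ₗ[K] A :=
  (𝒜 t).subtype ∘ₗ (DirectSum.component K (Mlat n) (fun i => 𝒜 i) t) ∘ₗ
    (DirectSum.decomposeAlgEquiv 𝒜).toLinearMap

lemma projG_apply (t : Mlat n) (a : A) : projG 𝒜 t a = (DirectSum.decompose 𝒜 a t : A) := rfl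

lemma projG_mem (t : Mlat n) (a : A) : projG 𝒜 t a ∈ 𝒜 t := (DirectSum.decompose 𝒜 a t).2

lemma projG_of_mem_same {t : Mlat n} {a : A} (h : a ∈ 𝒜 t) : projG 𝒜 t a = a :=
  DirectSum.decompose_of_mem_same 𝒜 h

lemma projG_of_mem_ne {t u : Mlat n} {a : A} (h : a ∈ 𝒜 t) (hne : t ≠ u) : projG 𝒜 u a = 0 := by
  rw [projG_apply, DirectSum.decompose_of_mem_ne 𝒜 h hne]

/-- degree-e part of a derivation D, as a linear map -/
noncomputable def hcL (D : Derivation K A A) (e : Mlat n) : A →ₗ[K] A :=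
  (DirectSum.toModule K (Mlat n) A
    (fun m => projG 𝒜 (m + e) ∘ₗ D.toLinearMap ∘ₗ (𝒜 m).subtype)) ∘ₗ
    (DirectSum.decomposeAlgEquiv 𝒜).toLinearMap

lemma hcL_apply_of_mem (D : Derivation K A A) (e : Mlat n) {m : Mlat n} {a : A} (h : a ∈ 𝒜 m) :
    hcL 𝒜 D e a = projG 𝒜 (m + e) (D a) := by
  have hdec : (DirectSum.decomposeAlgEquiv 𝒜).toLinearMap a
      = DirectSum.lof K (Mlat n) (fun i => (𝒜 i : Submodule K A)) m ⟨a, h⟩ := by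
    show DirectSum.decompose 𝒜 a = _
    rw [DirectSum.decompose_of_mem 𝒜 h, DirectSum.lof_eq_of]
  rw [hcL, LinearMap.comp_apply, hdec, DirectSum.toModule_lof]
  rfl


lemma hcL_leibniz (D : Derivation K A A) (e : Mlat n) :
    ∀ a b : A, hcL 𝒜 D e (a * b) = a * hcL 𝒜 D e b + b * hcL 𝒜 D e a := by
  refine DirectSum.Decomposition.inductionOn 𝒜 (motive := fun a => ∀ b : A,
      hcL 𝒜 D e (a * b) = a * hcL 𝒜 D e b + b * hcL 𝒜 D e a) (by simp) ?_ ?_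
  · rintro p ⟨a, hp⟩
    refine DirectSum.Decomposition.inductionOn 𝒜 (motive := fun b => hcL 𝒜 D e (a * b) =
        a * hcL 𝒜 D e b + b * hcL 𝒜 D e a) (by simp) ?_ ?_
    · rintro q ⟨b, hq⟩
      have hab : a * b ∈ 𝒜 (p + q) := SetLike.mul_mem_graded hp hq
      have h1 : p + q + e = p + (q + e) := by ring
      have h2 : p + q + e = q + (p + e) := by ring
      have key1 : projG 𝒜 (p + q + e) (a * D b) = a * projG 𝒜 (q + e) (D b) := by
        rw [h1]; exact DirectSum.coe_decompose_mul_add_of_left_mem 𝒜 hp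
      have key2 : projG 𝒜 (p + q + e) (b * D a) = b * projG 𝒜 (p + e) (D a) := by
        rw [h2]; exact DirectSum.coe_decompose_mul_add_of_left_mem 𝒜 hq
      rw [hcL_apply_of_mem 𝒜 D e hab, hcL_apply_of_mem 𝒜 D e hq, hcL_apply_of_mem 𝒜 D e hp,
        Derivation.leibniz, smul_eq_mul, smul_eq_mul, map_add, key1, key2]
    · intro b b' hb hb'
      rw [mul_add, map_add, hb, hb', map_add]
      ring
  · intro x x' hx hx' b
    rw [add_mul, map_add, hx, hx', map_add]
    ring

/-- degree-e homogeneous part of a derivation -/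
noncomputable def hcD (D : Derivation K A A) (e : Mlat n) : Derivation K A A where
  toLinearMap := hcL 𝒜 D e
  map_one_eq_zero' := by
    have h1 : (1 : A) ∈ 𝒜 0 := SetLike.GradedOne.one_mem
    show hcL 𝒜 D e 1 = 0
    rw [hcL_apply_of_mem 𝒜 D e h1, Derivation.map_one_eq_zero, map_zero]
  leibniz' := by
    intro a b
    show hcL 𝒜 D e (a * b) = a • hcL 𝒜 D e b + b • hcL 𝒜 D e a
    rw [smul_eq_mul, smul_eq_mul, hcL_leibniz]

lemma hcD_apply_of_mem (D : Derivation K A A) (e : Mlat n) {m : Mlat n} {a : A} (h : a ∈ 𝒜 m) :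
    hcD 𝒜 D e a = projG 𝒜 (m + e) (D a) := hcL_apply_of_mem 𝒜 D e h

lemma hcD_mem (D : Derivation K A A) (e : Mlat n) {m : Mlat n} {a : A} (h : a ∈ 𝒜 m) :
    hcD 𝒜 D e a ∈ 𝒜 (m + e) := by
  rw [hcD_apply_of_mem 𝒜 D e h]; exact projG_mem 𝒜 _ _

lemma decompose_D_eq_sum [∀ (i : Mlat n) (y : 𝒜 i), Decidable (y ≠ 0)]
    (D : Derivation K A A) (x : A) (t : Mlat n) :
    (DirectSum.decompose 𝒜 (D x) t : A) =
      ∑ u ∈ (DirectSum.decompose 𝒜 x).support,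
        projG 𝒜 t (D (DirectSum.decompose 𝒜 x u : A)) := by
  conv_lhs => rw [← DirectSum.sum_support_decompose 𝒜 x]
  rw [map_sum, ← projG_apply, map_sum]

lemma projG_D_ne (D : Derivation K A A) {u t : Mlat n} {y : A} (hy : y ∈ 𝒜 u)
    (h : projG 𝒜 t (D y) ≠ 0) : hcD 𝒜 D (t - u) ≠ 0 ∧ hcD 𝒜 D (t - u) y = projG 𝒜 t (D y) := by
  have key : hcD 𝒜 D (t - u) y = projG 𝒜 t (D y) := by
    rw [hcD_apply_of_mem 𝒜 D (t - u) hy, show u + (t - u) = t from by abel]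
  refine ⟨fun h0 => h ?_, key⟩
  rw [← key, h0]
  rfl

lemma iterate_support (D : Derivation K A A) {m : Mlat n} {a : A} (ha : a ∈ 𝒜 m) :
    ∀ (k : ℕ) (t : Mlat n), (DirectSum.decompose 𝒜 ((⇑D)^[k] a) t : A) ≠ 0 →
      ∃ f : Fin k → Mlat n, (∀ i, hcD 𝒜 D (f i) ≠ 0) ∧ t = m + ∑ i, f i := by
  classical
  intro k
  induction k with
  | zero =>
    intro t ht
    simp only [Function.iterate_zero, id_eq] at ht
    refine ⟨Fin.elim0, fun i => i.elim0, ?_⟩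
    have htm : t = m := by
      by_contra hne
      apply ht
      rw [DirectSum.decompose_of_mem_ne 𝒜 ha (Ne.symm hne)]
    rw [htm]
    simp
  | succ k ih =>
    intro t ht
    rw [Function.iterate_succ_apply', decompose_D_eq_sum 𝒜 D] at ht
    obtain ⟨u, hu, hterm⟩ := Finset.exists_ne_zero_of_sum_ne_zero ht
    set x : A := (⇑D)^[k] a with hx
    have hyu : (DirectSum.decompose 𝒜 x u : A) ∈ 𝒜 u := (DirectSum.decompose 𝒜 x u).2
    obtain ⟨hne, -⟩ := projG_D_ne 𝒜 D hyu hterm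
    have hxu : (DirectSum.decompose 𝒜 x u : A) ≠ 0 := by
      intro h0
      exact hterm (by rw [h0, map_zero, map_zero])
    obtain ⟨f, hf, hsum⟩ := ih u hxu
    refine ⟨Fin.snoc f (t - u), fun i => ?_, ?_⟩
    · refine Fin.lastCases ?_ ?_ i
      · simpa using hne
      · intro j; simpa using hf j
    · rw [Fin.sum_univ_castSucc]
      simp only [Fin.snoc_castSucc, Fin.snoc_last]
      rw [← add_assoc, ← hsum]
      ring

lemma iterate_hcD (D : Derivation K A A) {e : Mlat n}
    (hext : ∀ (k : ℕ) (f : Fin k → Mlat n), (∀ i, hcD 𝒜 D (f i) ≠ 0) →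
      ∑ i, f i = k • e → ∀ i, f i = e)
    {m : Mlat n} {a : A} (ha : a ∈ 𝒜 m) :
    ∀ k : ℕ, (⇑(hcD 𝒜 D e))^[k] a = projG 𝒜 (m + k • e) ((⇑D)^[k] a) := by
  classical
  intro k
  induction k with
  | zero => simp [projG_of_mem_same 𝒜 ha]
  | succ k ih =>
    rw [Function.iterate_succ_apply', Function.iterate_succ_apply', projG_apply,
      decompose_D_eq_sum 𝒜 D, ih]
    set x : A := (⇑D)^[k] a with hx
    have ht : m + (k + 1) • e = (m + k • e) + e := by
      rw [succ_nsmul, add_assoc]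
    rw [Finset.sum_eq_single (m + k • e) ?_ ?_]
    · have hmem : (DirectSum.decompose 𝒜 x (m + k • e) : A) ∈ 𝒜 (m + k • e) :=
        (DirectSum.decompose 𝒜 x (m + k • e)).2
      rw [show projG 𝒜 (m + k • e) x = (DirectSum.decompose 𝒜 x (m + k • e) : A) from rfl,
        hcD_apply_of_mem 𝒜 D e hmem, ht]
    · intro u hu hune
      by_contra hterm
      have hyu : (DirectSum.decompose 𝒜 x u : A) ∈ 𝒜 u := (DirectSum.decompose 𝒜 x u).2
      obtain ⟨hne, -⟩ := projG_D_ne 𝒜 D hyu hterm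
      have hxu : (DirectSum.decompose 𝒜 x u : A) ≠ 0 := by
        simpa using DFinsupp.mem_support_iff.mp hu
      obtain ⟨f, hf, hsum⟩ := iterate_support 𝒜 D ha k u hxu
      set g : Fin (k + 1) → Mlat n := Fin.snoc f (m + (k + 1) • e - u) with hg
      have hgne : ∀ i, hcD 𝒜 D (g i) ≠ 0 := by
        intro i
        refine Fin.lastCases ?_ ?_ i
        · simpa [hg] using hne
        · intro j; simpa [hg] using hf j
      have hgsum : ∑ i, g i = (k + 1) • e := by
        rw [Fin.sum_univ_castSucc]
        simp only [hg, Fin.snoc_castSucc, Fin.snoc_last]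
        rw [hsum]
        abel
      have hge := hext (k + 1) g hgne hgsum
      apply hune
      have hfe : ∀ j : Fin k, f j = e := fun j => by
        have := hge j.castSucc
        simpa [hg] using this
      rw [hsum]
      congr 1
      rw [Finset.sum_congr rfl (fun j _ => hfe j)]
      simp [Finset.sum_const, Finset.card_univ]
    · intro hns
      rw [DFinsupp.notMem_support_iff.mp hns]
      simp

end Graded

/-- Lemma 1.10: any derivation `∂` of a finitely generated normal `ℤⁿ`-graded domain
decomposes as a finite sum `∂ = Σ_e ∂_e` of homogeneous derivations `∂_e` of degree `e`;
moreover, if `∂` is locally nilpotent and `e` is a vertex (extreme point) of the convex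
hull of `{e : ∂_e ≠ 0}` in `M_ℚ`, then `∂_e` is locally nilpotent. -/
theorem stmt13 {n : ℕ} {K A : Type*} [Field K] [CharZero K]
    [CommRing A] [IsDomain A] [Algebra K A]
    (𝒜 : (Fin n → ℤ) → Submodule K A) [GradedAlgebra 𝒜]
    (hfg : Algebra.FiniteType K A) (hnorm : IsIntegrallyClosed A)
    (D : Derivation K A A) :
    ∃ (s : Finset (Fin n → ℤ)) (Δ : (Fin n → ℤ) → Derivation K A A),
      (∀ e, e ∉ s → Δ e = 0) ∧
      D = ∑ e ∈ s, Δ e ∧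
      (∀ e m, ∀ a ∈ 𝒜 m, Δ e a ∈ 𝒜 (m + e)) ∧
      (IsLND D → ∀ e : Fin n → ℤ, Δ e ≠ 0 →
        toQ e ∈ Set.extremePoints ℚ (convexHull ℚ (toQ '' {e' | Δ e' ≠ 0})) →
        IsLND (Δ e)) := by
  classical
  obtain ⟨S, hS⟩ := hfg.out
  set Δ : (Fin n → ℤ) → Derivation K A A := fun e => hcD 𝒜 D e with hΔ
  set s0 : Finset (Fin n → ℤ) := S.biUnion (fun g =>
    (DirectSum.decompose 𝒜 g).support.biUnion (fun m =>
      ((DirectSum.decompose 𝒜 (D (DirectSum.decompose 𝒜 g m : A))).support.image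
        (fun t => t - m)))) with hs0
  have hvanish : ∀ e ∉ s0, Δ e = 0 := by
    intro e he
    refine Derivation.ext_of_adjoin_eq_top (R := K) (↑S) hS ?_
    intro g hg
    show Δ e g = (0 : Derivation K A A) g
    have : Δ e g = ∑ m ∈ (DirectSum.decompose 𝒜 g).support,
        Δ e (DirectSum.decompose 𝒜 g m : A) := by
      conv_lhs => rw [← DirectSum.sum_support_decompose 𝒜 g]
      exact map_sum _ _ _
    rw [this]
    have hz : ∀ m ∈ (DirectSum.decompose 𝒜 g).support,
        Δ e (DirectSum.decompose 𝒜 g m : A) = 0 := by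
      intro m hm
      rw [hΔ]
      rw [hcD_apply_of_mem 𝒜 D e (DirectSum.decompose 𝒜 g m).2, projG_apply]
      have hns : (m + e) ∉ (DirectSum.decompose 𝒜
          (D (DirectSum.decompose 𝒜 g m : A))).support := by
        intro hmem
        exact he (Finset.mem_biUnion.mpr ⟨g, hg, Finset.mem_biUnion.mpr ⟨m, hm,
          Finset.mem_image.mpr ⟨m + e, hmem, by abel⟩⟩⟩)
      rw [DFinsupp.notMem_support_iff.mp hns]
      rfl
    rw [Finset.sum_eq_zero hz]
    simp
  set s : Finset (Fin n → ℤ) := s0.filter (fun e => Δ e ≠ 0) with hs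
  have hzero : ∀ e, e ∉ s → Δ e = 0 := by
    intro e he
    by_cases h0 : e ∈ s0
    · by_contra hne
      exact he (Finset.mem_filter.mpr ⟨h0, hne⟩)
    · exact hvanish e h0
  have hsum_apply : ∀ (t : Finset (Fin n → ℤ)) (a : A),
      (∑ e ∈ t, Δ e) a = ∑ e ∈ t, Δ e a := by
    intro t a
    induction t using Finset.induction with
    | empty => simp
    | insert _ _ h ih => rw [Finset.sum_insert h, Finset.sum_insert h, Derivation.add_apply, ih]
  have hDsum : D = ∑ e ∈ s, Δ e := by
    refine Derivation.ext ?_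
    refine DirectSum.Decomposition.inductionOn 𝒜
      (motive := fun a => D a = (∑ e ∈ s, Δ e) a) (by simp) ?_ ?_
    · rintro m ⟨a, ha⟩
      show D a = _
      rw [hsum_apply]
      rw [Finset.sum_congr rfl (fun e _ => hcD_apply_of_mem 𝒜 D e ha)]
      have hinj : ∀ x ∈ s, ∀ y ∈ s, m + x = m + y → x = y :=
        fun x _ y _ h => by simpa using h
      rw [show ∑ e ∈ s, projG 𝒜 (m + e) (D a)
          = ∑ t ∈ s.image (fun e => m + e), projG 𝒜 t (D a) from
        (Finset.sum_image (f := fun t => projG 𝒜 t (D a)) hinj).symm]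
      have hsub : (DirectSum.decompose 𝒜 (D a)).support ⊆ s.image (fun e => m + e) := by
        intro t htm
        have htne : projG 𝒜 t (D a) ≠ 0 := by
          intro h0
          exact DFinsupp.mem_support_iff.mp htm (Subtype.ext h0)
        obtain ⟨hne, -⟩ := projG_D_ne 𝒜 D ha htne
        have h0 : t - m ∈ s0 := by
          by_contra hn
          exact hne (hvanish _ hn)
        exact Finset.mem_image.mpr ⟨t - m, Finset.mem_filter.mpr ⟨h0, hne⟩, by abel⟩
      rw [← Finset.sum_subset hsub (fun t _ htn => by
        rw [projG_apply, DFinsupp.notMem_support_iff.mp htn]; rfl)]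
      exact (DirectSum.sum_support_decompose 𝒜 (D a)).symm
    · intro x y hx hy
      rw [map_add, hx, hy, map_add]
  refine ⟨s, Δ, hzero, hDsum, fun e m a ha => hcD_mem 𝒜 D e ha, ?_⟩
  intro hlnd e _hne hext
  have hext' : ∀ (k : ℕ) (f : Fin k → (Fin n → ℤ)), (∀ i, hcD 𝒜 D (f i) ≠ 0) →
      ∑ i, f i = k • e → ∀ i, f i = e := by
    intro k f hf hsum i
    have hC : Convex ℚ (convexHull ℚ (toQ '' {e' | Δ e' ≠ 0})) := convex_convexHull _ _
    have hmem : ∀ j : Fin k, toQ (f j) ∈ convexHull ℚ (toQ '' {e' | Δ e' ≠ 0}) :=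
      fun j => subset_convexHull _ _ ⟨f j, hf j, rfl⟩
    have := extreme_avg hC hext k (fun j => toQ (f j)) hmem
      (by rw [← toQ_sum, hsum, toQ_nsmul]) i
    exact toQ_inj this
  intro a
  set T := (DirectSum.decompose 𝒜 a).support with hT
  have h1 : ∀ m : Fin n → ℤ, ∃ k, (⇑D)^[k] (DirectSum.decompose 𝒜 a m : A) = 0 :=
    fun m => hlnd _
  choose kk hkk using h1
  refine ⟨T.sup kk, ?_⟩
  have hiter : ∀ j : ℕ, (⇑(Δ e))^[j] a = ∑ m ∈ T, (⇑(Δ e))^[j] (DirectSum.decompose 𝒜 a m : A) := by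
    intro j
    have hco : (⇑(Δ e))^[j] = ⇑(((Δ e : A →ₗ[K] A)) ^ j) := by
      funext x
      rw [Module.End.pow_apply, Derivation.coeFn_coe]
    conv_lhs => rw [← DirectSum.sum_support_decompose 𝒜 a]
    rw [hco, map_sum]
  rw [hiter]
  refine Finset.sum_eq_zero ?_
  intro m hm
  have hle : kk m ≤ T.sup kk := Finset.le_sup hm
  have hsplit : (⇑(Δ e))^[T.sup kk] (DirectSum.decompose 𝒜 a m : A)
      = (⇑(Δ e))^[T.sup kk - kk m] ((⇑(Δ e))^[kk m] (DirectSum.decompose 𝒜 a m : A)) := by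
    rw [← Function.iterate_add_apply]
    congr 1
    omega
  have hzero2 : (⇑(Δ e))^[kk m] (DirectSum.decompose 𝒜 a m : A) = 0 := by
    rw [hΔ, iterate_hcD 𝒜 D hext' (DirectSum.decompose 𝒜 a m).2, hkk, map_zero]
  rw [hsplit, hzero2]
  exact Function.iterate_fixed (map_zero _) _

end
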